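/- For every positive integer k and prime power q, the directional complement of H_k^q is vertex-transitive: for any two vertices u and v of the complement of H_k^q there exists an automorphism of the complement of H_k^q mapping u to v. -/

import Mathlib

/-- The standard bilinear form `⟨v,w⟩ = ∑ i, v i * w i` on `F^k`. -/
def bil {k : ℕ} {F : Type} [Field F] (v w : Fin k → F) : F := ∑ i, v i * w i

/-- A vector is *normal* if its first nonzero entry equals `1`. -/
def IsNormal {k : ℕ} {F : Type} [Field F] (v : Fin k → F) : Prop :=
  ∃ i : Fin k, v i = 1 ∧ ∀ j : Fin k, j < i → v j = 0

/-- The vertex set `W` of the digraph `H_k^q`. -/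
def IsHVertex {k : ℕ} {F : Type} [Field F] (p : (Fin k → F) × (Fin k → F)) : Prop :=
  IsNormal p.1 ∧ IsNormal p.2 ∧ bil p.1 p.2 ≠ 0

/-- The vertices of the digraph `H_k^q`. -/
abbrev HVtx (k : ℕ) (F : Type) [Field F] : Type :=
  {p : (Fin k → F) × (Fin k → F) // IsHVertex p}

/-- The (loopless) adjacency of `H_k^q`: there is an edge from the vertex `(v,w)` to a
distinct vertex `(v',w')` iff `⟨v,w'⟩ ≠ 0`. -/
def HAdj {k : ℕ} {F : Type} [Field F] (a b : HVtx k F) : Prop :=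
  a ≠ b ∧ bil a.val.1 b.val.2 ≠ 0

/-- The directional complement of a loopless digraph: for distinct vertices `a, b`,
`(a,b)` is an edge iff it is not an edge of the original digraph. -/
def digraphCompl {V : Type*} (G : V → V → Prop) : V → V → Prop :=
  fun a b => a ≠ b ∧ ¬ G a b

open Matrix

section Aux

variable {k : ℕ} {F : Type} [Field F]

lemma bil_eq_dot (v w : Fin k → F) : bil v w = v ⬝ᵥ w := rfl

lemma bil_comm (v w : Fin k → F) : bil v w = bil w v := by
  unfold bil; exact Finset.sum_congr rfl fun i _ => mul_comm _ _

lemma bil_smul_left (c : F) (v w : Fin k → F) : bil (c • v) w = c * bil v w := by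
  simp [bil_eq_dot, smul_dotProduct]

lemma bil_smul_right (c : F) (v w : Fin k → F) : bil v (c • w) = c * bil v w := by
  simp [bil_eq_dot, dotProduct_smul, mul_comm]

lemma IsNormal.ne_zero {v : Fin k → F} (h : IsNormal v) : v ≠ 0 := by
  obtain ⟨i, hi, -⟩ := h
  intro h0
  rw [h0] at hi
  simp at hi

lemma exists_normal_smul {v : Fin k → F} (hv : v ≠ 0) :
    ∃ c : F, c ≠ 0 ∧ IsNormal (c • v) := by
  classical
  have hne : (Finset.univ.filter fun i => v i ≠ 0).Nonempty := by
    by_contra h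
    rw [Finset.not_nonempty_iff_eq_empty, Finset.filter_eq_empty_iff] at h
    exact hv (funext fun i => by simpa using h (Finset.mem_univ i))
  set i := (Finset.univ.filter fun i => v i ≠ 0).min' hne with hidef
  have hiMem : i ∈ Finset.univ.filter fun i => v i ≠ 0 := Finset.min'_mem _ _
  have hvi : v i ≠ 0 := by simpa using hiMem
  refine ⟨(v i)⁻¹, inv_ne_zero hvi, i, ?_, fun j hj => ?_⟩
  · simp [inv_mul_cancel₀ hvi]
  · by_contra hvj
    have : i ≤ j := Finset.min'_le _ _ (by simpa using fun h => hvj (by simp [h]))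
    simp only [Pi.smul_apply, smul_eq_mul, mul_eq_zero] at hvj
    push_neg at hvj
    have hvj' : v j ≠ 0 := hvj.2
    have : i ≤ j := Finset.min'_le _ _ (by simp [hvj'])
    exact absurd hj (not_lt.mpr this)

lemma normal_unique {u u' : Fin k → F} (hu : IsNormal u) (hu' : IsNormal u')
    (c : F) (hc : c ≠ 0) (h : u' = c • u) : u' = u := by
  obtain ⟨i, hi1, hi0⟩ := hu
  obtain ⟨i', hi1', hi0'⟩ := hu'
  have hii : i = i' := by
    rcases lt_trichotomy i i' with hlt | heq | hgt
    · exfalso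
      have := hi0' i hlt
      rw [h] at this
      simp only [Pi.smul_apply, smul_eq_mul, hi1, mul_one] at this
      exact hc this
    · exact heq
    · exfalso
      have h0 := hi0 i' hgt
      have : u' i' = c * u i' := by rw [h]; simp
      rw [hi1', h0, mul_zero] at this
      simp at this
  have hc1 : c = 1 := by
    have : u' i = c * u i := by rw [h]; simp
    rw [hii, hi1'] at this
    rw [← hii, hi1, mul_one] at this
    exact this.symm
  rw [h, hc1, one_smul]

open Classical in
noncomputable def nrm (v : Fin k → F) : Fin k → F :=
  if h : v = 0 then 0 else (exists_normal_smul h).choose • v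

lemma nrm_isNormal {v : Fin k → F} (hv : v ≠ 0) : IsNormal (nrm v) := by
  rw [nrm, dif_neg hv]
  exact (exists_normal_smul hv).choose_spec.2

lemma nrm_smul_eq {v : Fin k → F} (hv : v ≠ 0) : ∃ c : F, c ≠ 0 ∧ nrm v = c • v := by
  rw [nrm, dif_neg hv]
  exact ⟨_, (exists_normal_smul hv).choose_spec.1, rfl⟩

lemma nrm_smul_normal {v : Fin k → F} {c : F} (hv : IsNormal v) (hc : c ≠ 0) :
    nrm (c • v) = v := by
  have hne : c • v ≠ 0 := smul_ne_zero hc hv.ne_zero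
  obtain ⟨d, hd, hdv⟩ := nrm_smul_eq hne
  exact normal_unique hv (nrm_isNormal hne) (d * c) (mul_ne_zero hd hc)
    (by rw [hdv, smul_smul])

lemma nrm_of_isNormal {v : Fin k → F} (hv : IsNormal v) : nrm v = v := by
  have := nrm_smul_normal (c := (1:F)) hv one_ne_zero
  rwa [one_smul] at this

variable {A B : Matrix (Fin k) (Fin k) F}

lemma mulVec_ne_zero (hBA : B * A = 1) {v : Fin k → F} (hv : v ≠ 0) :
    A.mulVec v ≠ 0 := by
  intro h
  apply hv
  have := congrArg B.mulVec h
  rwa [Matrix.mulVec_mulVec, hBA, Matrix.one_mulVec, Matrix.mulVec_zero] at this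

lemma bil_key (hBA : B * A = 1) (x y : Fin k → F) :
    bil (A.mulVec x) (Bᵀ.mulVec y) = bil x y := by
  rw [bil_eq_dot, bil_eq_dot, Matrix.dotProduct_mulVec, Matrix.vecMul_transpose,
    Matrix.mulVec_mulVec, hBA, Matrix.one_mulVec]

/-- The vertex map induced by a pair of mutually inverse matrices. -/
noncomputable def vmap (A B : Matrix (Fin k) (Fin k) F) (hBA : B * A = 1)
    (p : HVtx k F) : HVtx k F := by
  refine ⟨(nrm (A.mulVec p.val.1), nrm (Bᵀ.mulVec p.val.2)), ?_⟩
  obtain ⟨hv, hw, hb⟩ := p.prop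
  have hAB' : Aᵀ * Bᵀ = 1 := by rw [← Matrix.transpose_mul, hBA, Matrix.transpose_one]
  have h1 : A.mulVec p.val.1 ≠ 0 := mulVec_ne_zero hBA hv.ne_zero
  have h2 : Bᵀ.mulVec p.val.2 ≠ 0 := mulVec_ne_zero hAB' hw.ne_zero
  refine ⟨nrm_isNormal h1, nrm_isNormal h2, ?_⟩
  obtain ⟨c, hc, hcv⟩ := nrm_smul_eq h1
  obtain ⟨d, hd, hdv⟩ := nrm_smul_eq h2
  rw [hcv, hdv, bil_smul_left, bil_smul_right, bil_key hBA]
  exact mul_ne_zero hc (mul_ne_zero hd hb)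

lemma vmap_fst (A B : Matrix (Fin k) (Fin k) F) (hBA : B * A = 1) (p : HVtx k F) :
    (vmap A B hBA p).val.1 = nrm (A.mulVec p.val.1) := rfl

lemma vmap_snd (A B : Matrix (Fin k) (Fin k) F) (hBA : B * A = 1) (p : HVtx k F) :
    (vmap A B hBA p).val.2 = nrm (Bᵀ.mulVec p.val.2) := rfl

lemma vmap_inv (hAB : A * B = 1) (hBA : B * A = 1) (p : HVtx k F) :
    vmap B A hAB (vmap A B hBA p) = p := by
  obtain ⟨hv, hw, hb⟩ := p.prop
  have hAB' : Aᵀ * Bᵀ = 1 := by rw [← Matrix.transpose_mul, hBA, Matrix.transpose_one]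
  have h1 : A.mulVec p.val.1 ≠ 0 := mulVec_ne_zero hBA hv.ne_zero
  have h2 : Bᵀ.mulVec p.val.2 ≠ 0 := mulVec_ne_zero hAB' hw.ne_zero
  obtain ⟨c, hc, hcv⟩ := nrm_smul_eq h1
  obtain ⟨d, hd, hdv⟩ := nrm_smul_eq h2
  apply Subtype.ext
  apply Prod.ext
  · rw [vmap_fst, vmap_fst, hcv, Matrix.mulVec_smul, Matrix.mulVec_mulVec, hBA,
      Matrix.one_mulVec]
    exact nrm_smul_normal hv hc
  · rw [vmap_snd, vmap_snd, hdv, Matrix.mulVec_smul, Matrix.mulVec_mulVec, hAB',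
      Matrix.one_mulVec]
    exact nrm_smul_normal hw hd

/-- The automorphism of `HVtx` induced by a pair of mutually inverse matrices. -/
noncomputable def veq (A B : Matrix (Fin k) (Fin k) F) (hAB : A * B = 1) (hBA : B * A = 1) :
    HVtx k F ≃ HVtx k F where
  toFun := vmap A B hBA
  invFun := vmap B A hAB
  left_inv := vmap_inv hAB hBA
  right_inv := vmap_inv hBA hAB

lemma compl_iff (x y : HVtx k F) :
    digraphCompl HAdj x y ↔ x ≠ y ∧ bil x.val.1 y.val.2 = 0 := by
  unfold digraphCompl HAdj
  constructor
  · rintro ⟨h1, h2⟩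
    refine ⟨h1, ?_⟩
    by_contra hb
    exact h2 ⟨h1, hb⟩
  · rintro ⟨h1, h2⟩
    exact ⟨h1, fun h => h.2 h2⟩

lemma veq_pres (hAB : A * B = 1) (hBA : B * A = 1) (x y : HVtx k F) :
    digraphCompl HAdj x y ↔ digraphCompl HAdj (veq A B hAB hBA x) (veq A B hAB hBA y) := by
  rw [compl_iff, compl_iff]
  apply and_congr
  · exact ((veq A B hAB hBA).injective.ne_iff).symm
  · have hv := x.prop.1
    have hw := y.prop.2.1
    have h1 : A.mulVec x.val.1 ≠ 0 := mulVec_ne_zero hBA hv.ne_zero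
    have hAB' : Aᵀ * Bᵀ = 1 := by rw [← Matrix.transpose_mul, hBA, Matrix.transpose_one]
    have h2 : Bᵀ.mulVec y.val.2 ≠ 0 := mulVec_ne_zero hAB' hw.ne_zero
    obtain ⟨c, hc, hcv⟩ := nrm_smul_eq h1
    obtain ⟨d, hd, hdv⟩ := nrm_smul_eq h2
    show _ ↔ bil (nrm (A.mulVec x.val.1)) (nrm (Bᵀ.mulVec y.val.2)) = 0
    rw [hcv, hdv, bil_smul_left, bil_smul_right, bil_key hBA]
    simp [hc, hd]

end Aux

section Trans

variable {k : ℕ} {F : Type} [Field F]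

/-- The base vector `e₁`. -/
def e1 (k : ℕ) (F : Type) [Field F] : Fin (k+1) → F := Pi.single 0 1

lemma e1_isNormal : IsNormal (e1 k F) :=
  ⟨0, by simp [e1], fun j hj => absurd hj (by simp)⟩

lemma bil_e1 : bil (e1 k F) (e1 k F) ≠ 0 := by
  rw [bil_eq_dot]
  unfold e1
  rw [single_dotProduct]
  simp

/-- The base vertex `(e₁, e₁)`. -/
def eVtx (k : ℕ) (F : Type) [Field F] : HVtx (k+1) F :=
  ⟨(e1 k F, e1 k F), e1_isNormal, e1_isNormal, bil_e1⟩

lemma exists_to_base (u : HVtx (k+1) F) :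
    ∃ φ : HVtx (k+1) F ≃ HVtx (k+1) F,
      (∀ x y, digraphCompl HAdj x y ↔ digraphCompl HAdj (φ x) (φ y)) ∧ φ u = eVtx k F := by
  classical
  obtain ⟨⟨v, w⟩, hv, hw, hb⟩ := u
  -- the linear functional y ↦ y ⬝ᵥ v
  set f : (Fin (k+1) → F) →ₗ[F] F :=
    { toFun := fun y => y ⬝ᵥ v
      map_add' := fun a b => add_dotProduct a b v
      map_smul' := fun c a => smul_dotProduct c a v } with hf
  have hfw : f w ≠ 0 := by
    show w ⬝ᵥ v ≠ 0
    rw [← bil_eq_dot, ← bil_comm]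
    exact hb
  have hfsurj : Function.Surjective f := by
    intro a
    have hvne : v ≠ 0 := hv.ne_zero
    have : ∃ j, v j ≠ 0 := by
      by_contra h
      push_neg at h
      exact hvne (funext fun j => by simpa using h j)
    obtain ⟨j, hj⟩ := this
    refine ⟨(a * (v j)⁻¹) • (Pi.single j 1 : Fin (k+1) → F), ?_⟩
    show ((a * (v j)⁻¹) • (Pi.single j 1 : Fin (k+1) → F)) ⬝ᵥ v = a
    rw [smul_dotProduct, single_dotProduct]
    field_simp
    rw [smul_eq_mul, div_mul_cancel₀ a hj]
  have hrank : Module.finrank F (LinearMap.ker f) = k := by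
    have h1 := LinearMap.finrank_range_add_finrank_ker f
    rw [LinearMap.range_eq_top.mpr hfsurj, finrank_top] at h1
    simp [Module.finrank_pi, Module.finrank_self] at h1
    omega
  set b : Module.Basis (Fin k) F (LinearMap.ker f) := Module.finBasisOfFinrankEq F _ hrank with hbdef
  set rows : Fin (k+1) → (Fin (k+1) → F) :=
    Fin.cons w (fun i => ((b i : Fin (k+1) → F))) with hrows
  set A : Matrix (Fin (k+1)) (Fin (k+1)) F := Matrix.of rows with hA
  have hli : LinearIndependent F rows := by
    rw [hrows, linearIndependent_fin_cons]
    constructor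
    · have := b.linearIndependent
      exact this.map' (LinearMap.ker f).subtype (Submodule.ker_subtype _)
    · intro hmem
      have hsub : Submodule.span F (Set.range fun i => ((b i : Fin (k+1) → F)))
          ≤ LinearMap.ker f := by
        rw [Submodule.span_le]
        rintro _ ⟨i, rfl⟩
        exact (b i).prop
      exact hfw (hsub hmem)
  have hU : IsUnit A := linearIndependent_rows_iff_isUnit.mp hli
  obtain ⟨U, hUA⟩ := hU
  set B : Matrix (Fin (k+1)) (Fin (k+1)) F := ↑U⁻¹ with hB
  have hAB : A * B = 1 := by rw [← hUA, hB]; exact U.mul_inv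
  have hBA : B * A = 1 := by rw [← hUA, hB]; exact U.inv_mul
  refine ⟨veq A B hAB hBA, veq_pres hAB hBA, ?_⟩
  -- compute the image of u
  have hAv : A.mulVec v = (bil v w) • e1 k F := by
    funext i
    refine Fin.cases ?_ (fun j => ?_) i
    · show rows 0 ⬝ᵥ v = _
      rw [hrows]
      simp only [Fin.cons_zero]
      rw [← bil_eq_dot, bil_comm]
      simp [e1, Pi.single_apply]
    · show rows j.succ ⬝ᵥ v = _
      rw [hrows]
      simp only [Fin.cons_succ]
      have : ((b j : Fin (k+1) → F)) ⬝ᵥ v = 0 := (b j).prop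
      rw [this]
      simp [e1, Pi.single_apply, Fin.succ_ne_zero]
  have hAtE : Aᵀ.mulVec (e1 k F) = w := by
    funext j
    show Aᵀ j ⬝ᵥ e1 k F = w j
    have : Aᵀ j ⬝ᵥ e1 k F = A 0 j := by
      unfold e1
      rw [dotProduct_single]
      simp [Matrix.transpose_apply]
    rw [this, hA]
    show rows 0 j = w j
    rw [hrows]; simp
  have hBw : Bᵀ.mulVec w = e1 k F := by
    rw [← hAtE, Matrix.mulVec_mulVec, ← Matrix.transpose_mul, hAB, Matrix.transpose_one,
      Matrix.one_mulVec]
  apply Subtype.ext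
  apply Prod.ext
  · show nrm (A.mulVec v) = e1 k F
    rw [hAv]
    exact nrm_smul_normal e1_isNormal hb
  · show nrm (Bᵀ.mulVec w) = e1 k F
    rw [hBw]
    exact nrm_of_isNormal e1_isNormal

end Trans

/-- For every positive integer `k` and prime power `q`, the directional complement of
`H_k^q` is vertex-transitive. -/
theorem Hkq_compl_vertexTransitive (q k : ℕ) (hq : IsPrimePow q) (hk : 0 < k)
    (F : Type) [Field F] [Fintype F] (hF : Fintype.card F = q) (u v : HVtx k F) :
    ∃ φ : HVtx k F ≃ HVtx k F,
      (∀ x y : HVtx k F, digraphCompl HAdj x y ↔ digraphCompl HAdj (φ x) (φ y)) ∧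
      φ u = v := by
  cases k with
  | zero => omega
  | succ k' =>
    obtain ⟨φu, hφu, hu⟩ := exists_to_base u
    obtain ⟨φv, hφv, hv⟩ := exists_to_base v
    refine ⟨φu.trans φv.symm, fun x y => ?_, ?_⟩
    · rw [hφu x y]
      have := hφv (φv.symm (φu x)) (φv.symm (φu y))
      simp only [Equiv.apply_symm_apply] at this
      simpa [Equiv.trans_apply] using this.symm
    · show φv.symm (φu u) = v
      rw [hu, ← hv, Equiv.symm_apply_apply]
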